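/- Let s ∈ (0,1), let H ⊂ ℝ^N be an open halfspace with reflection Q across ∂H, and let v : ℝ^N → ℝ be measurable, antisymmetric (v(Q(x)) = -v(x) for all x), and satisfy v ≥ 0 a.e. in H ∖ U for an open bounded U ⊂ H. Set w := χ_H v⁻. Then, whenever the integrals converge absolutely, ∬_{ℝ^{2N}} [(w(x)-w(y))² + (v(x)-v(y))(w(x)-w(y))] / |x-y|^{N+2s} dx dy ≤ 0. -/

import Mathlib

open MeasureTheory RealInnerProductSpace

section aux
variable {N : ℕ} {p ν : EuclideanSpace ℝ (Fin N)}
  {Q : EuclideanSpace ℝ (Fin N) → EuclideanSpace ℝ (Fin N)}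

lemma aux_norm (hν : ‖ν‖ = 1) (x y : EuclideanSpace ℝ (Fin N)) :
    ‖x - (y - (2 * ⟪y - p, ν⟫) • ν)‖ ^ 2
      = ‖x - y‖ ^ 2 + 4 * ⟪x - p, ν⟫ * ⟪y - p, ν⟫ := by
  have h1 : x - (y - (2 * ⟪y - p, ν⟫) • ν) = (x - y) + (2 * ⟪y - p, ν⟫) • ν := by abel
  rw [h1, norm_add_sq_real]
  have h2 : ⟪x - y, (2 * ⟪y - p, ν⟫) • ν⟫ = (2 * ⟪y - p, ν⟫) * ⟪x - y, ν⟫ :=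
    real_inner_smul_right _ _ _
  have h3 : ⟪x - y, ν⟫ = ⟪x - p, ν⟫ - ⟪y - p, ν⟫ := by
    have h : x - y = (x - p) - (y - p) := by abel
    rw [h, inner_sub_left]
  have h4 : ‖(2 * ⟪y - p, ν⟫) • ν‖ ^ 2 = (2 * ⟪y - p, ν⟫) ^ 2 := by
    rw [norm_smul]; simp [hν, mul_pow, sq_abs]
  rw [h2, h3, h4]; ring

lemma aux_refl_apply' (hν : ‖ν‖ = 1) (z : EuclideanSpace ℝ (Fin N)) :
    (Submodule.reflection (ℝ ∙ ν)ᗮ : _ ≃ₗᵢ[ℝ] _) z = z - (2 * ⟪z, ν⟫) • ν := by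
  rw [Submodule.reflection_apply, Submodule.starProjection_orthogonal_val, Submodule.starProjection_singleton]
  have h : ⟪ν, z⟫ = ⟪z, ν⟫ := real_inner_comm _ _
  rw [h, hν]; norm_num; module

lemma aux_Q_eq (hν : ‖ν‖ = 1) (hQ : ∀ y, Q y = y - (2 * ⟪y - p, ν⟫) • ν) (y) :
    Q y = p + (Submodule.reflection (ℝ ∙ ν)ᗮ : _ ≃ₗᵢ[ℝ] _) (y - p) := by
  rw [hQ, aux_refl_apply' hν]; abel

lemma aux_Q_iso (hν : ‖ν‖ = 1) (hQ : ∀ y, Q y = y - (2 * ⟪y - p, ν⟫) • ν) :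
    Isometry Q := by
  have h : Q = fun y => p + (Submodule.reflection (ℝ ∙ ν)ᗮ : _ ≃ₗᵢ[ℝ] _) (y - p) := funext (aux_Q_eq hν hQ)
  rw [h]
  exact (isometry_add_left p).comp
    (((Submodule.reflection (ℝ ∙ ν)ᗮ : _ ≃ₗᵢ[ℝ] _).isometry).comp (Isometry.of_dist_eq
      fun a b => by simp only [dist_eq_norm]; congr 1; abel))

lemma aux_Q_mp (hν : ‖ν‖ = 1) (hQ : ∀ y, Q y = y - (2 * ⟪y - p, ν⟫) • ν) :
    MeasurePreserving Q volume volume := by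
  have h : Q = (fun z => p + z) ∘ (⇑(Submodule.reflection (ℝ ∙ ν)ᗮ : _ ≃ₗᵢ[ℝ] _)) ∘ (fun y => y - p) := by
    funext y; exact aux_Q_eq hν hQ y
  rw [h]
  exact (measurePreserving_add_left volume p).comp
    (((Submodule.reflection (ℝ ∙ ν)ᗮ : _ ≃ₗᵢ[ℝ] _).measurePreserving).comp
      (measurePreserving_sub_right volume p))

lemma aux_phiQ (hν : ‖ν‖ = 1) (hQ : ∀ y, Q y = y - (2 * ⟪y - p, ν⟫) • ν) (y) :
    ⟪Q y - p, ν⟫ = -⟪y - p, ν⟫ := by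
  rw [hQ]
  have h : y - (2 * ⟪y - p, ν⟫) • ν - p = (y - p) - (2 * ⟪y - p, ν⟫) • ν := by abel
  rw [h, inner_sub_left, real_inner_smul_left, real_inner_self_eq_norm_sq, hν]
  ring

lemma aux_QQ (hν : ‖ν‖ = 1) (hQ : ∀ y, Q y = y - (2 * ⟪y - p, ν⟫) • ν) (y) :
    Q (Q y) = y := by
  rw [hQ (Q y), aux_phiQ hν hQ, hQ y]
  rw [show (2 * -⟪y - p, ν⟫) • ν = -((2 * ⟪y - p, ν⟫) • ν) by rw [← neg_smul]; ring_nf]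
  abel

lemma aux_Q_emb (hν : ‖ν‖ = 1) (hQ : ∀ y, Q y = y - (2 * ⟪y - p, ν⟫) • ν) :
    MeasurableEmbedding Q := by
  have hc : Continuous Q := (aux_Q_iso hν hQ).continuous
  exact (Homeomorph.mk ⟨Q, Q, aux_QQ hν hQ, aux_QQ hν hQ⟩
    hc hc).toMeasurableEquiv.measurableEmbedding

lemma aux_null (p ν : EuclideanSpace ℝ (Fin N)) (hν : ‖ν‖ = 1) :
    volume {y : EuclideanSpace ℝ (Fin N) | ⟪y - p, ν⟫ = 0} = 0 := by
  have hset : {y : EuclideanSpace ℝ (Fin N) | ⟪y - p, ν⟫ = 0}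
      = ↑(AffineSubspace.mk' p (ℝ ∙ ν)ᗮ) := by
    ext y
    rw [Set.mem_setOf_eq, SetLike.mem_coe, AffineSubspace.mem_mk', vsub_eq_sub,
      Submodule.mem_orthogonal_singleton_iff_inner_right, real_inner_comm]
  rw [hset]
  refine Measure.addHaar_affineSubspace volume _ fun htop => ?_
  have hmem : p + ν ∈ AffineSubspace.mk' p (ℝ ∙ ν)ᗮ := htop ▸ AffineSubspace.mem_top ℝ _ _
  rw [AffineSubspace.mem_mk', vsub_eq_sub, add_sub_cancel_left,
    Submodule.mem_orthogonal_singleton_iff_inner_right, real_inner_self_eq_norm_sq, hν] at hmem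
  norm_num at hmem

lemma aux_maxsum (a : ℝ) : a + max (-a) 0 = max a 0 := by
  rcases le_total a 0 with h | h
  · rw [max_eq_left (neg_nonneg.mpr h), max_eq_right h]; ring
  · rw [max_eq_right (neg_nonpos.mpr h), max_eq_left h]; ring

end aux

set_option maxHeartbeats 2000000 in
theorem stmt12 (N : ℕ) (s : ℝ) (hs : s ∈ Set.Ioo (0 : ℝ) 1)
    (p ν : EuclideanSpace ℝ (Fin N)) (hν : ‖ν‖ = 1)
    (H : Set (EuclideanSpace ℝ (Fin N)))
    (hH : H = {x | (0:ℝ) < inner ℝ (x - p) ν})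
    (Q : EuclideanSpace ℝ (Fin N) → EuclideanSpace ℝ (Fin N))
    (hQ : ∀ y, Q y = y - (2 * inner ℝ (y - p) ν : ℝ) • ν)
    (U : Set (EuclideanSpace ℝ (Fin N))) (hUo : IsOpen U)
    (hUb : Bornology.IsBounded U) (hUH : U ⊆ H)
    (v : EuclideanSpace ℝ (Fin N) → ℝ) (hv : Measurable v)
    (hanti : ∀ x, v (Q x) = -v x)
    (hpos : ∀ᵐ x ∂volume, x ∈ H \ U → 0 ≤ v x)
    (w : EuclideanSpace ℝ (Fin N) → ℝ)
    (hw : w = H.indicator (fun x => max (-v x) 0))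
    (hint1 : Integrable (fun q : EuclideanSpace ℝ (Fin N) × EuclideanSpace ℝ (Fin N) =>
      (w q.1 - w q.2) ^ 2 / ‖q.1 - q.2‖ ^ ((N : ℝ) + 2 * s)) volume)
    (hint2 : Integrable (fun q : EuclideanSpace ℝ (Fin N) × EuclideanSpace ℝ (Fin N) =>
      (v q.1 - v q.2) * (w q.1 - w q.2) / ‖q.1 - q.2‖ ^ ((N : ℝ) + 2 * s)) volume) :
    (∫ q : EuclideanSpace ℝ (Fin N) × EuclideanSpace ℝ (Fin N),
      ((w q.1 - w q.2) ^ 2 + (v q.1 - v q.2) * (w q.1 - w q.2)) /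
        ‖q.1 - q.2‖ ^ ((N : ℝ) + 2 * s)) ≤ 0 := by
  obtain ⟨hs0, -⟩ := hs
  set α : ℝ := (N : ℝ) + 2 * s with hαdef
  have hαpos : 0 < α := by positivity
  -- Q facts
  have hQ' : ∀ y, Q y = y - (2 * ⟪y - p, ν⟫) • ν := hQ
  have hφQ : ∀ y, ⟪Q y - p, ν⟫ = -⟪y - p, ν⟫ := aux_phiQ hν hQ'
  have hQQ : ∀ y, Q (Q y) = y := aux_QQ hν hQ'
  have hQiso : Isometry Q := aux_Q_iso hν hQ'
  have hQmp : MeasurePreserving Q volume volume := aux_Q_mp hν hQ'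
  have hQemb : MeasurableEmbedding Q := aux_Q_emb hν hQ'
  have hnormQ : ∀ a b, ‖Q a - Q b‖ = ‖a - b‖ := fun a b => by
    simpa [dist_eq_norm] using hQiso.dist_eq a b
  have hmemH : ∀ x, x ∈ H ↔ (0:ℝ) < ⟪x - p, ν⟫ := fun x => by rw [hH]; exact Iff.rfl
  have hQnotH : ∀ y, y ∈ H → Q y ∉ H := fun y hy hmem => by
    rw [hmemH] at hy hmem; rw [hφQ] at hmem; linarith
  -- w facts
  have hwmem : ∀ x ∈ H, w x = max (-v x) 0 := fun x hx => by
    rw [hw]; exact Set.indicator_of_mem hx _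
  have hwnot : ∀ x ∉ H, w x = 0 := fun x hx => by
    rw [hw]; exact Set.indicator_of_notMem hx _
  have hw0 : ∀ x, 0 ≤ w x := fun x => by
    rw [hw]; exact Set.indicator_nonneg (fun y _ => le_max_right _ _) x
  have hwu : ∀ x, w x * (v x + w x) = 0 := by
    intro x
    by_cases hx : x ∈ H
    · rw [hwmem x hx, aux_maxsum]
      rcases le_total (v x) 0 with h | h
      · rw [max_eq_right h]; ring
      · rw [max_eq_right (neg_nonpos.mpr h)]; ring
    · rw [hwnot x hx]; ring
  -- the function g
  set g : (EuclideanSpace ℝ (Fin N) × EuclideanSpace ℝ (Fin N)) → ℝ :=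
    fun q => (w q.1 * (v q.2 + w q.2) + w q.2 * (v q.1 + w q.1)) / ‖q.1 - q.2‖ ^ α with hg
  have key : ∀ q : EuclideanSpace ℝ (Fin N) × EuclideanSpace ℝ (Fin N),
      ((w q.1 - w q.2) ^ 2 + (v q.1 - v q.2) * (w q.1 - w q.2)) / ‖q.1 - q.2‖ ^ α = -g q := by
    intro q
    rw [hg, ← neg_div]
    congr 1
    linear_combination hwu q.1 + hwu q.2
  have hInt_g : Integrable g volume := by
    refine (Integrable.neg (hint1.add hint2)).congr (Filter.Eventually.of_forall fun q => ?_)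
    have := key q
    rw [add_div] at this
    simp only [Pi.neg_apply, Pi.add_apply]
    linarith [this]
  rw [show (∫ q : EuclideanSpace ℝ (Fin N) × EuclideanSpace ℝ (Fin N),
      ((w q.1 - w q.2) ^ 2 + (v q.1 - v q.2) * (w q.1 - w q.2)) / ‖q.1 - q.2‖ ^ α)
      = -∫ q, g q by rw [← integral_neg]; exact integral_congr_ae (Filter.Eventually.of_forall key)]
  rw [neg_nonpos]
  -- measurable sets
  have hHopen : IsOpen H := by
    rw [hH]
    exact isOpen_lt continuous_const ((continuous_id.sub continuous_const).inner continuous_const)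
  have hHmeas : MeasurableSet H := hHopen.measurableSet
  set A := H ×ˢ H with hA
  set B := H ×ˢ Hᶜ with hB
  set C := Hᶜ ×ˢ H with hC
  have mA : MeasurableSet A := hHmeas.prod hHmeas
  have mB : MeasurableSet B := hHmeas.prod hHmeas.compl
  have mC : MeasurableSet C := hHmeas.compl.prod hHmeas
  have hIA : Integrable (A.indicator g) volume := hInt_g.indicator mA
  have hIB : Integrable (B.indicator g) volume := hInt_g.indicator mB
  have hIC : Integrable (C.indicator g) volume := hInt_g.indicator mC
  -- split
  have hsplit : ∀ q, g q = A.indicator g q + B.indicator g q + C.indicator g q := by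
    rintro ⟨x, y⟩
    by_cases hx : x ∈ H <;> by_cases hy : y ∈ H
    · simp [Set.indicator_apply, hA, hB, hC, Set.mem_prod, hx, hy]
    · simp [Set.indicator_apply, hA, hB, hC, Set.mem_prod, hx, hy]
    · simp [Set.indicator_apply, hA, hB, hC, Set.mem_prod, hx, hy]
    · have hzero : g (x, y) = 0 := by
        rw [hg]; simp only; rw [hwnot x hx, hwnot y hy]; simp
      simp [Set.indicator_apply, hA, hB, hC, Set.mem_prod, hx, hy, hzero]
  -- swap machinery
  have hvol : (volume : Measure (EuclideanSpace ℝ (Fin N) × EuclideanSpace ℝ (Fin N)))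
      = (volume : Measure (EuclideanSpace ℝ (Fin N))).prod volume := rfl
  have hswapmp : MeasurePreserving (Prod.swap)
      (volume : Measure (EuclideanSpace ℝ (Fin N) × EuclideanSpace ℝ (Fin N))) volume := by
    rw [hvol]; exact Measure.measurePreserving_swap
  have hswapemb : MeasurableEmbedding
      (Prod.swap : EuclideanSpace ℝ (Fin N) × EuclideanSpace ℝ (Fin N) → _) :=
    MeasurableEquiv.prodComm.measurableEmbedding
  have hswapint : ∀ F : EuclideanSpace ℝ (Fin N) × EuclideanSpace ℝ (Fin N) → ℝ,
      ∫ q, F (Prod.swap q) = ∫ q, F q := fun F => hswapmp.integral_comp hswapemb F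
  have hgsymm : ∀ x y, g (y, x) = g (x, y) := by
    intro x y
    rw [hg]; simp only
    rw [norm_sub_rev]; ring_nf
  -- II : ∫ C = ∫ B
  have hBC : ∫ q, C.indicator g q = ∫ q, B.indicator g q := by
    have h : ∀ q : EuclideanSpace ℝ (Fin N) × EuclideanSpace ℝ (Fin N),
        C.indicator g (Prod.swap q) = B.indicator g q := by
      rintro ⟨x, y⟩
      by_cases hx : x ∈ H <;> by_cases hy : y ∈ H <;>
        simp [Set.indicator_apply, hB, hC, Set.mem_prod, hx, hy, hgsymm x y]
    rw [← hswapint (C.indicator g)]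
    exact integral_congr_ae (Filter.Eventually.of_forall h)
  -- III machinery : T
  set T : EuclideanSpace ℝ (Fin N) × EuclideanSpace ℝ (Fin N) →
      EuclideanSpace ℝ (Fin N) × EuclideanSpace ℝ (Fin N) := fun q => (q.1, Q q.2) with hT
  have hTmp : MeasurePreserving T volume volume := by
    rw [hvol]; exact (MeasurePreserving.id volume).prod hQmp
  have hTemb : MeasurableEmbedding T := MeasurableEmbedding.id.prodMap hQemb
  -- a.e. statement used twice
  have hZ : volume {y : EuclideanSpace ℝ (Fin N) | ⟪y - p, ν⟫ = 0} = 0 := aux_null p ν hν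
  have hprodZ : (volume : Measure (EuclideanSpace ℝ (Fin N) × EuclideanSpace ℝ (Fin N)))
      (Set.univ ×ˢ {y | ⟪y - p, ν⟫ = 0}) = 0 := by
    rw [hvol, Measure.prod_prod, hZ, mul_zero]
  have haeBA : ∀ᵐ q : EuclideanSpace ℝ (Fin N) × EuclideanSpace ℝ (Fin N) ∂volume,
      B.indicator g (T q) = A.indicator (fun r => g (T r)) q := by
    have hae : ∀ᵐ q : EuclideanSpace ℝ (Fin N) × EuclideanSpace ℝ (Fin N) ∂volume,
        q ∉ Set.univ ×ˢ {y | ⟪y - p, ν⟫ = 0} :=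
      measure_eq_zero_iff_ae_notMem.mp hprodZ
    filter_upwards [hae] with q hq
    obtain ⟨x, y⟩ := q
    have hy0 : ⟪y - p, ν⟫ ≠ 0 := fun h => hq ⟨Set.mem_univ _, h⟩
    by_cases hx : x ∈ H
    · by_cases hy : y ∈ H
      · have hQy : Q y ∈ Hᶜ := hQnotH y hy
        simp [Set.indicator_apply, hA, hB, Set.mem_prod, hx, hy, hQy, hT]
      · have hQy : Q y ∉ Hᶜ := by
          rw [hmemH] at hy
          push_neg at hy
          have hlt : ⟪y - p, ν⟫ < 0 := lt_of_le_of_ne hy hy0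
          intro hmem
          rw [Set.mem_compl_iff, hmemH, hφQ] at hmem
          push_neg at hmem
          linarith
        simp [Set.indicator_apply, hA, hB, Set.mem_prod, hx, hy, hQy, hT]
    · simp [Set.indicator_apply, hA, hB, Set.mem_prod, hx, hT]
  -- III : ∫ B = ∫ A (g ∘ T)
  have hBA : ∫ q, B.indicator g q = ∫ q, A.indicator (fun r => g (T r)) q := by
    rw [← hTmp.integral_comp hTemb (B.indicator g)]
    exact integral_congr_ae haeBA
  -- IV : swap A piece
  have hswapA : ∀ q : EuclideanSpace ℝ (Fin N) × EuclideanSpace ℝ (Fin N),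
      A.indicator (fun r => g (T r)) (Prod.swap q) = A.indicator (fun r => g (r.2, Q r.1)) q := by
    rintro ⟨x, y⟩
    by_cases hx : x ∈ H <;> by_cases hy : y ∈ H <;>
      simp [Set.indicator_apply, hA, Set.mem_prod, hx, hy, hT]
  have hA' : ∫ q, A.indicator (fun r => g (T r)) q = ∫ q, A.indicator (fun r => g (r.2, Q r.1)) q := by
    rw [← hswapint (A.indicator (fun r => g (T r)))]
    exact integral_congr_ae (Filter.Eventually.of_forall hswapA)
  -- integrability of the two new pieces
  have hIT : Integrable (fun q => B.indicator g (T q)) volume :=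
    (hTmp.integrable_comp_emb hTemb).mpr hIB
  have hIA2 : Integrable (A.indicator (fun r => g (T r))) volume := hIT.congr haeBA
  have hIA3 : Integrable (A.indicator (fun r => g (r.2, Q r.1))) volume := by
    have h := (hswapmp.integrable_comp_emb hswapemb).mpr hIA2
    exact h.congr (Filter.Eventually.of_forall hswapA)
  -- combine
  have hgid : ∫ q, g q = ∫ q, (A.indicator g q + A.indicator (fun r => g (T r)) q
      + A.indicator (fun r => g (r.2, Q r.1)) q) := by
    calc ∫ q, g q
        = ∫ q, (A.indicator g q + B.indicator g q + C.indicator g q) :=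
          integral_congr_ae (Filter.Eventually.of_forall hsplit)
      _ = (∫ q, (A.indicator g q + B.indicator g q)) + ∫ q, C.indicator g q := by
          have hIAB : Integrable (fun q => A.indicator g q + B.indicator g q) volume := hIA.add hIB
          rw [integral_add hIAB hIC]
      _ = (∫ q, A.indicator g q) + (∫ q, B.indicator g q) + ∫ q, C.indicator g q := by
          have hIA' : Integrable (fun q => A.indicator g q) volume := hIA
          have hIB' : Integrable (fun q => B.indicator g q) volume := hIB
          rw [integral_add hIA' hIB']
      _ = (∫ q, A.indicator g q) + (∫ q, A.indicator (fun r => g (T r)) q)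
          + ∫ q, A.indicator (fun r => g (r.2, Q r.1)) q := by rw [hBC, hBA, hA']
      _ = _ := by
          have hIA' : Integrable (fun q => A.indicator g q) volume := hIA
          have hIA2' : Integrable (fun q => A.indicator (fun r => g (T r)) q) volume := hIA2
          have hIA3' : Integrable (fun q => A.indicator (fun r => g (r.2, Q r.1)) q) volume := hIA3
          have hIA12 : Integrable (fun q => A.indicator g q + A.indicator (fun r => g (T r)) q) volume := hIA'.add hIA2'
          rw [← integral_add hIA' hIA2', ← integral_add hIA12 hIA3']
  rw [hgid]
  refine integral_nonneg fun q => ?_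
  rw [Pi.zero_apply]
  obtain ⟨x, y⟩ := q
  by_cases hxy : (x, y) ∈ A
  · obtain ⟨hx, hy⟩ := hxy
    have hxy' : (x, y) ∈ A := ⟨hx, hy⟩
    simp only [Set.indicator_of_mem hxy', hT]
    -- core pointwise positivity
    have hφx : (0:ℝ) < ⟪x - p, ν⟫ := (hmemH x).mp hx
    have hφy : (0:ℝ) < ⟪y - p, ν⟫ := (hmemH y).mp hy
    have hQx : Q x ∉ H := hQnotH x hx
    have hQy : Q y ∉ H := hQnotH y hy
    have hnrm2 : ‖x - Q y‖ ^ 2 = ‖x - y‖ ^ 2 + 4 * ⟪x - p, ν⟫ * ⟪y - p, ν⟫ := by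
      rw [hQ' y]; exact aux_norm hν x y
    have hD2norm : 0 < ‖x - Q y‖ := by
      have h1 := norm_nonneg (x - Q y)
      have h2 := sq_nonneg (‖x - y‖)
      nlinarith
    have hle : ‖x - y‖ ≤ ‖x - Q y‖ := by
      have h1 := norm_nonneg (x - Q y)
      have h2 := norm_nonneg (x - y)
      nlinarith
    have hyQx : ‖y - Q x‖ = ‖x - Q y‖ := by
      have h := hnormQ y (Q x)
      rw [hQQ] at h
      rw [← h, norm_sub_rev]
    set aP := max (v x) 0 with haP
    set aM := max (-v x) 0 with haM
    set bP := max (v y) 0 with hbP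
    set bM := max (-v y) 0 with hbM
    set m := aM * bP + bM * aP with hm
    set D₁ := ‖x - y‖ ^ α with hD₁
    set D₂ := ‖x - Q y‖ ^ α with hD₂
    have hD2pos : 0 < D₂ := Real.rpow_pos_of_pos hD2norm α
    have hm0 : 0 ≤ m := by
      have := le_max_right (v x) 0
      have := le_max_right (-v x) 0
      have := le_max_right (v y) 0
      have := le_max_right (-v y) 0
      positivity
  -- needs: positivity on products of max; maybe nlinarith instead
    have e1 : g (x, y) = m / D₁ := by
      rw [hg]; simp only
      rw [hwmem x hx, hwmem y hy, aux_maxsum (v x), aux_maxsum (v y)]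
      all_goals (simp only [hm, haP, haM, hbP, hbM, hD₁]; ring)
    have e2 : g (x, Q y) = (aM * (-(v y))) / D₂ := by
      rw [hg]; simp only
      rw [hwmem x hx, hwnot _ hQy, hanti y]
      all_goals (simp only [haM, hD₂]; ring)
    have e3 : g (y, Q x) = (bM * (-(v x))) / D₂ := by
      rw [hg]; simp only
      rw [hwmem y hy, hwnot _ hQx, hanti x, hyQx]
      all_goals (simp only [hbM, hD₂]; ring)
    have hvx : v x = aP - aM := by
      rw [haP, haM]
      rcases le_total (v x) 0 with h | h
      · rw [max_eq_right h, max_eq_left (neg_nonneg.mpr h)]; ring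
      · rw [max_eq_left h, max_eq_right (neg_nonpos.mpr h)]; ring
    have hvy : v y = bP - bM := by
      rw [hbP, hbM]
      rcases le_total (v y) 0 with h | h
      · rw [max_eq_right h, max_eq_left (neg_nonneg.mpr h)]; ring
      · rw [max_eq_left h, max_eq_right (neg_nonpos.mpr h)]; ring
    have ecomb : g (x, Q y) + g (y, Q x) = (2 * (aM * bM) - m) / D₂ := by
      rw [e2, e3, ← add_div]
      congr 1
      rw [hvx, hvy, hm]; ring
    have h1 : m / D₂ ≤ m / D₁ := by
      by_cases hxy0 : x = y
      · have hmz : m = 0 := by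
          rw [hm]
          subst hxy0
          rcases le_total (v x) 0 with h | h
          · rw [haP, hbP, max_eq_right h]; ring
          · rw [haM, hbM, max_eq_right (neg_nonpos.mpr h)]; ring
        rw [hmz, zero_div, zero_div]
      · have hnpos : 0 < ‖x - y‖ := by
          rw [norm_pos_iff]
          exact sub_ne_zero_of_ne hxy0
        have hD1pos : 0 < D₁ := Real.rpow_pos_of_pos hnpos α
        have hD12 : D₁ ≤ D₂ := Real.rpow_le_rpow (norm_nonneg _) hle hαpos.le
        gcongr
    have h2 : 0 ≤ 2 * (aM * bM) / D₂ := by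
      have hbM0 : 0 ≤ bM := le_max_right _ _
      have haM0 : 0 ≤ aM := le_max_right _ _
      positivity
    have expand : (2 * (aM * bM) - m) / D₂ = 2 * (aM * bM) / D₂ - m / D₂ := by
      rw [sub_div]
    have goaleq : g (x, y) + g (x, Q y) + g (y, Q x) = m / D₁ + (2 * (aM * bM) - m) / D₂ := by
      rw [e1, ← ecomb]; ring
    rw [goaleq, expand]
    linarith
  · simp [Set.indicator_of_notMem hxy]
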